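/- arXiv:1810.01255 — 3 statements merged into one kernel-verified Lean document; each statement's English description precedes it below -/
import Mathlib

section
/- Let v₁, v₂ ∈ ℝ² be linearly independent and let Λ = {a·v₁ + b·v₂ : a, b ∈ ℤ} be the lattice they generate. Suppose ⋃_{p∈Λ} closedBall(p, 1) = ℝ² and suppose there exists w ∈ Λ with w ≠ 0 and ‖w‖ ≤ 1 (this is equivalent to each unit disk of the lattice family containing the centers of at least two other disks of the family). Then the lower density of the family of unit disks centered at the points of Λ satisfies liminf_{λ→∞} N_Λ(λ)·π/(4λ²) ≥ 2π/(2+√3). -/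
open Metric MeasureTheory Filter Real
open scoped ENNReal

noncomputable section

/-- The Euclidean plane. -/
abbrev Pt := EuclideanSpace ℝ (Fin 2)

/-- The open square `(−λ,λ) × (−λ,λ)`. -/
def openSquare (l : ℝ) : Set Pt := {p | |p 0| < l ∧ |p 1| < l}

/-- The lattice generated by `v₁` and `v₂`. -/
def lattice (v₁ v₂ : Pt) : Set Pt := {p | ∃ a b : ℤ, p = (a : ℝ) • v₁ + (b : ℝ) • v₂}

/-- `N_Λ(λ)`: the extended number of pairs `(a, b) ∈ ℤ × ℤ` such that the closed unit ball
centered at `a·v₁ + b·v₂` meets the open square `(−λ,λ) × (−λ,λ)`. -/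
def NcountLat (v₁ v₂ : Pt) (l : ℝ) : ℝ≥0∞ :=
  ({q : ℤ × ℤ |
    (closedBall ((q.1 : ℝ) • v₁ + (q.2 : ℝ) • v₂) 1 ∩ openSquare l).Nonempty}.encard : ℕ∞)

lemma norm_sq_pt (x : Pt) : ‖x‖^2 = (x 0)^2 + (x 1)^2 := by
  rw [EuclideanSpace.norm_eq, Real.sq_sqrt (by positivity)]
  simp [Fin.sum_univ_two, sq_abs]

lemma det_ne_zero_of_li (v₁ v₂ : Pt) (hli : LinearIndependent ℝ ![v₁, v₂]) :
    v₁ 0 * v₂ 1 - v₁ 1 * v₂ 0 ≠ 0 := by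
  intro hdet
  rw [linearIndependent_fin2] at hli
  obtain ⟨h2, h1⟩ := hli
  simp only [Matrix.cons_val_one, Matrix.head_cons, Matrix.cons_val_zero] at h2 h1
  rcases eq_or_ne (v₂ 0) 0 with h0 | h0
  · rcases eq_or_ne (v₂ 1) 0 with h0' | h0'
    · apply h2; ext i; fin_cases i <;> simpa
    · apply h1 (v₁ 1 / v₂ 1)
      ext i
      fin_cases i <;> simp [div_mul_eq_mul_div]
      · field_simp
        nlinarith [hdet]
      · field_simp
  · apply h1 (v₁ 0 / v₂ 0)
    ext i
    fin_cases i <;> simp [div_mul_eq_mul_div]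
    · field_simp
    · field_simp
      nlinarith [hdet]

lemma vol_openSquare (r : ℝ) (hr : 0 ≤ r) : volume (openSquare r) = ENNReal.ofReal (4 * r^2) := by
  have hsq : openSquare r = (MeasurableEquiv.toLp 2 (Fin 2 → ℝ)).symm ⁻¹'
      (Set.univ.pi fun _ => Set.Ioo (-r) r) := by
    ext p
    simp only [openSquare, Set.mem_setOf_eq, Set.mem_preimage, Set.mem_pi, Set.mem_univ,
      forall_true_left, Set.mem_Ioo]
    constructor
    · rintro ⟨h0, h1⟩ i
      fin_cases i
      · exact abs_lt.mp h0
      · exact abs_lt.mp h1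
    · intro h
      exact ⟨abs_lt.mpr (h 0), abs_lt.mpr (h 1)⟩
  rw [hsq, (EuclideanSpace.volume_preserving_symm_measurableEquiv_toLp (Fin 2)).measure_preimage
    (MeasurableSet.univ_pi fun _ => measurableSet_Ioo).nullMeasurableSet]
  rw [volume_pi, Measure.pi_pi]
  simp only [Real.volume_Ioo]
  rw [Fin.prod_univ_two, ← ENNReal.ofReal_mul (by linarith)]
  congr 1; ring

lemma count_lower (v₁ v₂ : Pt) (hli : LinearIndependent ℝ ![v₁, v₂]) (l : ℝ)
    (hl : ‖v₁‖ + ‖v₂‖ ≤ l) (hdet : 0 < |v₁ 0 * v₂ 1 - v₁ 1 * v₂ 0|) :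
    ENNReal.ofReal (4 * (l - (‖v₁‖ + ‖v₂‖))^2) ≤
      NcountLat v₁ v₂ l * ENNReal.ofReal |v₁ 0 * v₂ 1 - v₁ 1 * v₂ 0| := by
  set D : ℝ := ‖v₁‖ + ‖v₂‖ with hD
  set dt : ℝ := |v₁ 0 * v₂ 1 - v₁ 1 * v₂ 0| with hdt
  have hcard : Fintype.card (Fin 2) = Module.finrank ℝ Pt := by simp
  set b : Module.Basis (Fin 2) ℝ Pt := basisOfLinearIndependentOfCardEqFinrank hli hcard with hb
  have hb0 : b 0 = v₁ := by rw [hb, coe_basisOfLinearIndependentOfCardEqFinrank]; rfl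
  have hb1 : b 1 = v₂ := by rw [hb, coe_basisOfLinearIndependentOfCardEqFinrank]; rfl
  set b₀ : Module.Basis (Fin 2) ℝ Pt := (EuclideanSpace.basisFun (Fin 2) ℝ).toBasis with hb₀
  have hvol0 : volume (ZSpan.fundamentalDomain b₀) = 1 := by
    rw [measure_congr (ZSpan.fundamentalDomain_ae_parallelepiped b₀ volume)]
    exact (EuclideanSpace.basisFun (Fin 2) ℝ).volume_parallelepiped
  have hvol : volume (ZSpan.fundamentalDomain b) = ENNReal.ofReal dt := by
    rw [ZSpan.measure_fundamentalDomain b volume b₀, hvol0, mul_one]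
    congr 2
    rw [Module.Basis.det_apply, Matrix.det_fin_two]
    simp [Module.Basis.toMatrix_apply, hb0, hb1, hb₀]
    ring
  set S : Set (ℤ × ℤ) := {q | (q.1 : ℝ) • v₁ + (q.2 : ℝ) • v₂ ∈ openSquare l} with hS
  have hSsub : S ⊆ {q : ℤ × ℤ |
      (closedBall ((q.1 : ℝ) • v₁ + (q.2 : ℝ) • v₂) 1 ∩ openSquare l).Nonempty} := by
    intro q hq
    exact ⟨(q.1 : ℝ) • v₁ + (q.2 : ℝ) • v₂, mem_closedBall_self (by norm_num), hq⟩
  -- fundamental domain norm bound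
  have hFDnorm : ∀ f ∈ ZSpan.fundamentalDomain b, ‖f‖ ≤ D := by
    intro f hf
    have hrepr := b.sum_repr f
    rw [Fin.sum_univ_two, hb0, hb1] at hrepr
    rw [ZSpan.mem_fundamentalDomain] at hf
    have h0 := hf 0
    have h1 := hf 1
    simp only [Set.mem_Ico] at h0 h1
    calc ‖f‖ = ‖b.repr f 0 • v₁ + b.repr f 1 • v₂‖ := by rw [hrepr]
    _ ≤ ‖b.repr f 0 • v₁‖ + ‖b.repr f 1 • v₂‖ := norm_add_le _ _
    _ = |b.repr f 0| * ‖v₁‖ + |b.repr f 1| * ‖v₂‖ := by rw [norm_smul, norm_smul]; rfl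
    _ ≤ 1 * ‖v₁‖ + 1 * ‖v₂‖ := by
        gcongr
        · rw [abs_of_nonneg h0.1]; exact h0.2.le
        · rw [abs_of_nonneg h1.1]; exact h1.2.le
    _ = D := by rw [hD]; ring
  have hcoord : ∀ x : Pt, ∀ i : Fin 2, |x i| ≤ ‖x‖ := by
    intro x i
    rw [EuclideanSpace.norm_eq, show |x i| = Real.sqrt ((x i)^2) by rw [Real.sqrt_sq_eq_abs]]
    apply Real.sqrt_le_sqrt
    fin_cases i <;> simp [Fin.sum_univ_two, sq_abs] <;> positivity
  -- covering of the small square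
  have hcov : openSquare (l - D) ⊆
      ⋃ q ∈ S, ((fun x => -((q.1 : ℝ) • v₁ + (q.2 : ℝ) • v₂) + x) ⁻¹' ZSpan.fundamentalDomain b) := by
    intro z hz
    set m : ℤ := ⌊b.repr z 0⌋
    set k : ℤ := ⌊b.repr z 1⌋
    set p : Pt := (m : ℝ) • v₁ + (k : ℝ) • v₂ with hp
    set f : Pt := z - p with hf
    have hreprp : ∀ i, b.repr p i = (if i = 0 then (m:ℝ) else (k:ℝ)) := by
      intro i
      rw [hp, ← hb0, ← hb1]
      simp only [map_add, _root_.map_smul, Module.Basis.repr_self, Finsupp.coe_add, Finsupp.coe_smul,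
        Pi.add_apply, Pi.smul_apply, smul_eq_mul]
      fin_cases i <;> simp [Finsupp.single_apply]
    have hfrepr : ∀ i, b.repr f i = b.repr z i - (if i = 0 then (m:ℝ) else (k:ℝ)) := by
      intro i
      rw [hf, map_sub, Finsupp.coe_sub, Pi.sub_apply, hreprp i]
    have hfFD : f ∈ ZSpan.fundamentalDomain b := by
      rw [ZSpan.mem_fundamentalDomain]
      intro i
      have h0 : (0:ℝ) ≤ b.repr z 0 - (m:ℝ) := sub_nonneg.mpr (Int.floor_le _)
      have h0' : b.repr z 0 - (m:ℝ) < 1 := by linarith [Int.lt_floor_add_one (b.repr z 0)]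
      have h1 : (0:ℝ) ≤ b.repr z 1 - (k:ℝ) := sub_nonneg.mpr (Int.floor_le _)
      have h1' : b.repr z 1 - (k:ℝ) < 1 := by linarith [Int.lt_floor_add_one (b.repr z 1)]
      fin_cases i
      · show (b.repr f) 0 ∈ Set.Ico (0:ℝ) 1
        rw [hfrepr 0]
        simpa using ⟨by linarith, h0'⟩
      · show (b.repr f) 1 ∈ Set.Ico (0:ℝ) 1
        rw [hfrepr 1]
        simpa using ⟨by linarith, h1'⟩
    have hfnorm : ‖f‖ ≤ D := hFDnorm f hfFD
    have hzc := hz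
    rw [openSquare, Set.mem_setOf_eq] at hzc
    have hpS : (m, k) ∈ S := by
      rw [hS, Set.mem_setOf_eq]
      constructor
      · have : p 0 = z 0 - f 0 := by rw [hf]; simp
        rw [show ((m:ℝ) • v₁ + (k:ℝ) • v₂) 0 = p 0 from rfl, this]
        calc |z 0 - f 0| ≤ |z 0| + |f 0| := abs_sub _ _
        _ < (l - D) + D := by
            have := hcoord f 0
            exact add_lt_add_of_lt_of_le hzc.1 (le_trans this hfnorm)
        _ = l := by ring
      · have : p 1 = z 1 - f 1 := by rw [hf]; simp
        rw [show ((m:ℝ) • v₁ + (k:ℝ) • v₂) 1 = p 1 from rfl, this]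
        calc |z 1 - f 1| ≤ |z 1| + |f 1| := abs_sub _ _
        _ < (l - D) + D := by
            have := hcoord f 1
            exact add_lt_add_of_lt_of_le hzc.2 (le_trans this hfnorm)
        _ = l := by ring
    apply Set.mem_biUnion hpS
    show -p + z ∈ ZSpan.fundamentalDomain b
    rw [show -p + z = f by rw [hf]; abel]
    exact hfFD
  -- measure argument
  rcases Set.finite_or_infinite S with hfin | hinf
  · have hcard_le : (S.encard : ℝ≥0∞) ≤ NcountLat v₁ v₂ l := by
      exact ENat.toENNReal_le.mpr (Set.encard_mono hSsub)
    have hvol_le : ENNReal.ofReal (4 * (l - D)^2) ≤ (S.encard : ℝ≥0∞) * ENNReal.ofReal dt := by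
      rw [← vol_openSquare (l - D) (by linarith)]
      calc volume (openSquare (l - D)) ≤
          volume (⋃ q ∈ S, ((fun x => -((q.1 : ℝ) • v₁ + (q.2 : ℝ) • v₂) + x) ⁻¹' ZSpan.fundamentalDomain b)) :=
            measure_mono hcov
      _ = volume (⋃ q ∈ hfin.toFinset,
            ((fun x => -((q.1 : ℝ) • v₁ + (q.2 : ℝ) • v₂) + x) ⁻¹' ZSpan.fundamentalDomain b)) := by
          congr 1
          ext x
          simp [Set.Finite.mem_toFinset]
      _ ≤ ∑ q ∈ hfin.toFinset,
            volume (((fun x => -((q.1 : ℝ) • v₁ + (q.2 : ℝ) • v₂) + x) ⁻¹' ZSpan.fundamentalDomain b)) :=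
          measure_biUnion_finset_le _ _
      _ = ∑ q ∈ hfin.toFinset, ENNReal.ofReal dt := by
          apply Finset.sum_congr rfl
          intro q _
          rw [measure_preimage_add, hvol]
      _ = (hfin.toFinset.card : ℝ≥0∞) * ENNReal.ofReal dt := by
          rw [Finset.sum_const, nsmul_eq_mul]
      _ = (S.encard : ℝ≥0∞) * ENNReal.ofReal dt := by
          rw [hfin.encard_eq_coe_toFinset_card]
          simp
    exact le_trans hvol_le (mul_le_mul_left hcard_le _)
  · have : NcountLat v₁ v₂ l = ⊤ := by
      have : {q : ℤ × ℤ |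
          (closedBall ((q.1 : ℝ) • v₁ + (q.2 : ℝ) • v₂) 1 ∩ openSquare l).Nonempty}.Infinite :=
        hinf.mono hSsub
      rw [NcountLat, this.encard_eq]
      rfl
    rw [this, ENNReal.top_mul (ENNReal.ofReal_pos.mpr hdet).ne']
    exact le_top

lemma small_case_aux (s h dt : ℝ) (hs : 0 < s) (hs1 : s ≤ 1) (hdts : dt = s * h)
    (hcase : h < s / 2) : dt ≤ (2 + Real.sqrt 3) / 2 := by
  nlinarith [Real.sqrt_nonneg 3]

lemma hlow_aux (s y h R m k uw dt : ℝ) (hs : 0 < s) (hh : 0 < h) (hy0 : 0 ≤ y) (hyh : y ≤ h)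
    (hdts : dt = s*h) (hRy : R = h - y) (hRsq' : R^2 = s^2/4 + y^2)
    (hm : m ≤ 0 ∨ 1 ≤ m) (hk : k = 0 ∨ k ≤ -1 ∨ 1 ≤ k) :
    (s*R)^2 ≤ (s^2*(1/2 - m) - k*uw)^2 + (y*s - k*dt)^2 := by
  have hRsq : (s*R)^2 = s^2*(s^2/4 + y^2) := by rw [mul_pow, hRsq']
  rcases hk with hk | hk
  · subst hk
    have hm2 : (0:ℝ) ≤ m^2 - m := by rcases hm with hm | hm <;> nlinarith
    have hs4 : (0:ℝ) ≤ s^4 * (m^2 - m) := mul_nonneg (by positivity) hm2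
    nlinarith [hRsq, hs4, sq_nonneg (y*s)]
  · have hBlow : (y*s - k*dt)^2 ≥ (s*(h-y))^2 := by
      rw [hdts]
      have F : 0 ≤ (y - k*h)^2 - (h-y)^2 := by
        rcases hk with hk' | hk'
        · have f1 : 0 ≤ 2*y - (k+1)*h := by nlinarith
          have f2 : 0 ≤ (1-k)*h := by nlinarith
          nlinarith [mul_nonneg f1 f2]
        · have f1 : 0 ≤ (k-1)*h := by nlinarith
          have f2 : 0 ≤ (k+1)*h - 2*y := by nlinarith
          nlinarith [mul_nonneg f1 f2]
      nlinarith [mul_nonneg (sq_nonneg s) F]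
    have hrr : (s*R)^2 = (s*(h-y))^2 := by rw [hRy]
    linarith [sq_nonneg (s^2*(1/2 - m) - k*uw), hrr, hBlow]

lemma hR1_aux (s R d : ℝ) (hs : 0 < s) (hRpos : 0 < R) (hlow : (s*R)^2 ≤ d * s^2)
    (hup : d ≤ 1) : R ≤ 1 := by
  have hss : d * s^2 ≤ s^2 := by nlinarith [sq_nonneg s]
  have hR2 : R^2 ≤ 1 := by nlinarith [mul_pos hs hs]
  nlinarith

lemma final_aux (s h dt : ℝ) (hs : 0 < s) (hs1 : s ≤ 1) (hh : 0 < h) (hdts : dt = s * h)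
    (hkey2 : h^2 + s^2/4 ≤ 2*h) : dt ≤ (2 + Real.sqrt 3) / 2 := by
  have h1 : (h-1)^2 ≤ 1 - s^2/4 := by nlinarith
  have h2 : h - 1 ≤ Real.sqrt (1 - s^2/4) := by
    calc h - 1 ≤ |h - 1| := le_abs_self _
    _ = Real.sqrt ((h-1)^2) := (Real.sqrt_sq_eq_abs _).symm
    _ ≤ _ := Real.sqrt_le_sqrt h1
  have h3 : s * Real.sqrt (1 - s^2/4) ≤ Real.sqrt 3 / 2 := by
    have hmul : s * Real.sqrt (1 - s^2/4) = Real.sqrt (s^2 * (1 - s^2/4)) := by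
      rw [Real.sqrt_mul (sq_nonneg s), Real.sqrt_sq hs.le]
    rw [hmul]
    have hq1 : s^2 ≤ 1 := by nlinarith
    have h34 : s^2 * (1 - s^2/4) ≤ 3/4 := by
      nlinarith [mul_nonneg (sub_nonneg.mpr hq1) (by nlinarith : (0:ℝ) ≤ 3 - s^2)]
    calc Real.sqrt (s^2 * (1 - s^2/4)) ≤ Real.sqrt (3/4) := Real.sqrt_le_sqrt h34
    _ = Real.sqrt 3 / 2 := by
        rw [show (3:ℝ)/4 = (Real.sqrt 3 / 2)^2 by
          rw [div_pow, Real.sq_sqrt (by norm_num : (0:ℝ) ≤ 3)]; norm_num]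
        exact Real.sqrt_sq (by positivity)
  have h4 : s * (h - 1) ≤ s * Real.sqrt (1 - s^2/4) := mul_le_mul_of_nonneg_left h2 hs.le
  nlinarith

lemma det_le_of_cover (v₁ v₂ w u : Pt)
    (hcover : (⋃ p ∈ lattice v₁ v₂, closedBall p 1) = Set.univ)
    (hw1 : ‖w‖ ≤ 1) (hw0 : w ≠ 0)
    (hgen : ∀ p ∈ lattice v₁ v₂, ∃ m k : ℤ, p = (m : ℝ) • w + (k : ℝ) • u)
    (hdet : w 0 * u 1 - w 1 * u 0 = |v₁ 0 * v₂ 1 - v₁ 1 * v₂ 0|)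
    (hdetpos : 0 < |v₁ 0 * v₂ 1 - v₁ 1 * v₂ 0|) :
    |v₁ 0 * v₂ 1 - v₁ 1 * v₂ 0| ≤ (2 + Real.sqrt 3) / 2 := by
  obtain ⟨dt, hdt'⟩ : ∃ t, t = |v₁ 0 * v₂ 1 - v₁ 1 * v₂ 0| := ⟨_, rfl⟩
  rw [← hdt'] at hdet hdetpos ⊢
  obtain ⟨s, hs'⟩ : ∃ t, t = ‖w‖ := ⟨_, rfl⟩
  have hs : 0 < s := hs' ▸ norm_pos_iff.mpr hw0
  have hs1 : s ≤ 1 := hs' ▸ hw1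
  have hs2 : (w 0)^2 + (w 1)^2 = s^2 := by rw [hs']; exact (norm_sq_pt w).symm
  obtain ⟨h, hh'⟩ : ∃ t, t = dt / s := ⟨_, rfl⟩
  have hh : 0 < h := hh' ▸ div_pos hdetpos hs
  have hdts : dt = s * h := by rw [hh']; field_simp
  have hsqrt3 : (0:ℝ) ≤ Real.sqrt 3 := Real.sqrt_nonneg 3
  by_cases hcase : h < s / 2
  · exact small_case_aux s h dt hs hs1 hdts hcase
  · push_neg at hcase
    obtain ⟨y, hy'⟩ : ∃ t, t = (h^2 - s^2/4) / (2*h) := ⟨_, rfl⟩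
    obtain ⟨R, hR'⟩ : ∃ t, t = (h^2 + s^2/4) / (2*h) := ⟨_, rfl⟩
    have hy0 : 0 ≤ y := by
      rw [hy']
      apply div_nonneg _ (by positivity)
      nlinarith
    have hyh : y ≤ h := by
      rw [hy', div_le_iff₀ (by positivity)]
      nlinarith
    have hRy : R = h - y := by
      rw [hR', hy', eq_sub_iff_add_eq, ← add_div,
        show h^2 + s^2/4 + (h^2 - s^2/4) = (2*h)*h by ring,
        mul_div_cancel_left₀ _ (by positivity : (2*h:ℝ) ≠ 0)]
    have hRpos : 0 < R := by rw [hR']; positivity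
    have h2y : 2*h*y = h^2 - s^2/4 := by
      rw [hy', mul_comm, div_mul_cancel₀ _ (by positivity : (2*h:ℝ) ≠ 0)]
    obtain ⟨x, hx'⟩ : ∃ t : Pt, t = EuclideanSpace.single 0 (w 0/2 - y * w 1 / s) +
      EuclideanSpace.single 1 (w 1/2 + y * w 0 / s) := ⟨_, rfl⟩
    have hx0 : x 0 = w 0/2 - y * w 1 / s := by rw [hx']; simp
    have hx1 : x 1 = w 1/2 + y * w 0 / s := by rw [hx']; simp
    have hxmem : x ∈ ⋃ p ∈ lattice v₁ v₂, closedBall p 1 := by rw [hcover]; trivial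
    rw [Set.mem_iUnion₂] at hxmem
    obtain ⟨p, hp, hball⟩ := hxmem
    obtain ⟨m, k, hpmk⟩ := hgen p hp
    have hdist : ‖x - p‖ ≤ 1 := by rwa [mem_closedBall, dist_eq_norm] at hball
    have hnsq : ‖x - p‖^2 = (x 0 - p 0)^2 + (x 1 - p 1)^2 := by
      rw [norm_sq_pt]; rfl
    have hp0 : p 0 = (m:ℝ) * w 0 + (k:ℝ) * u 0 := by rw [hpmk]; rfl
    have hp1 : p 1 = (m:ℝ) * w 1 + (k:ℝ) * u 1 := by rw [hpmk]; rfl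
    obtain ⟨d0, hd0⟩ : ∃ t, t = x 0 - p 0 := ⟨_, rfl⟩
    obtain ⟨d1, hd1⟩ : ∃ t, t = x 1 - p 1 := ⟨_, rfl⟩
    have hnsq2 : ‖x - p‖^2 = d0^2 + d1^2 := by rw [hnsq, hd0, hd1]
    obtain ⟨uw, huw'⟩ : ∃ t, t = u 0 * w 0 + u 1 * w 1 := ⟨_, rfl⟩
    have frame : (d0^2 + d1^2) * s^2 = (d0*w 0 + d1*w 1)^2 + (d1*w 0 - d0*w 1)^2 := by
      linear_combination (-(d0^2 + d1^2)) * hs2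
    have hA : d0*w 0 + d1*w 1 = s^2*(1/2 - (m:ℝ)) - (k:ℝ)*uw := by
      rw [hd0, hd1, hx0, hx1, hp0, hp1, huw']
      have hsne : s ≠ 0 := hs.ne'
      field_simp
      linear_combination (1 - 2*(m:ℝ)) * s * hs2
    have hB : d1*w 0 - d0*w 1 = y*s - (k:ℝ)*dt := by
      rw [hd1, hd0, hx1, hx0, hp1, hp0, ← hdet]
      have hsne : s ≠ 0 := hs.ne'
      field_simp
      linear_combination 2 * y * hs2
    have hkey : (d0^2 + d1^2) * s^2 =
        (s^2*(1/2 - (m:ℝ)) - (k:ℝ)*uw)^2 + (y*s - (k:ℝ)*dt)^2 := by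
      rw [frame, hA, hB]
    have hup : d0^2 + d1^2 ≤ 1 := by
      rw [← hnsq2]
      calc ‖x - p‖^2 ≤ 1^2 := pow_le_pow_left₀ (norm_nonneg _) hdist 2
      _ = 1 := one_pow 2
    clear hx' hx0 hx1 hnsq hnsq2 hball hdist hpmk hp0 hp1 hd0 hd1 hcover hgen hdt' hs' hh' hy' huw' hp
    clear x p
    have hRsq' : R^2 = s^2/4 + y^2 := by
      rw [hRy]
      linear_combination -h2y
    have hm : (m:ℝ) ≤ 0 ∨ 1 ≤ (m:ℝ) := by
      rcases le_or_gt m 0 with hm' | hm'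
      · exact Or.inl (by exact_mod_cast hm')
      · exact Or.inr (by exact_mod_cast hm')
    have hkk : (k:ℝ) = 0 ∨ (k:ℝ) ≤ -1 ∨ 1 ≤ (k:ℝ) := by
      rcases lt_trichotomy k 0 with hk' | hk' | hk'
      · refine Or.inr (Or.inl ?_)
        have : k ≤ -1 := by omega
        exact_mod_cast this
      · exact Or.inl (by exact_mod_cast hk')
      · exact Or.inr (Or.inr (by exact_mod_cast hk'))
    have hlow : (s*R)^2 ≤ (d0^2 + d1^2) * s^2 := by
      rw [hkey]
      exact hlow_aux s y h R (m:ℝ) (k:ℝ) uw dt hs hh hy0 hyh hdts hRy hRsq' hm hkk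
    have hR1 : R ≤ 1 := hR1_aux s R (d0^2 + d1^2) hs hRpos hlow hup
    have hkey2 : h^2 + s^2/4 ≤ 2*h := by
      rw [hR', div_le_one (by positivity)] at hR1
      linarith
    exact final_aux s h dt hs hs1 hh hdts hkey2

lemma exists_prim (v₁ v₂ : Pt)
    (hshort : ∃ w ∈ lattice v₁ v₂, w ≠ 0 ∧ ‖w‖ ≤ 1)
    (hdetpos : 0 < |v₁ 0 * v₂ 1 - v₁ 1 * v₂ 0|) :
    ∃ w u : Pt, ‖w‖ ≤ 1 ∧ w ≠ 0 ∧
      (∀ p ∈ lattice v₁ v₂, ∃ m k : ℤ, p = (m : ℝ) • w + (k : ℝ) • u) ∧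
      w 0 * u 1 - w 1 * u 0 = |v₁ 0 * v₂ 1 - v₁ 1 * v₂ 0| := by
  obtain ⟨w₀, ⟨a, b, rfl⟩, hw0ne, hw0le⟩ := hshort
  have hab : ¬(a = 0 ∧ b = 0) := by
    rintro ⟨rfl, rfl⟩
    simp at hw0ne
  set g : ℤ := (Int.gcd a b : ℤ) with hg'
  have hgpos : 0 < g := by
    rw [hg']
    exact_mod_cast Int.gcd_pos_iff.mpr (by tauto)
  have hga : g ∣ a := Int.gcd_dvd_left a b
  have hgb : g ∣ b := Int.gcd_dvd_right a b
  obtain ⟨a', ha'⟩ := hga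
  obtain ⟨b', hb'⟩ := hgb
  have hcop : Int.gcd a' b' = 1 := by
    have hgZ : (0:ℤ) < (Int.gcd a b : ℤ) := hg' ▸ hgpos
    have h1 : 0 < Int.gcd a b := by exact_mod_cast hgZ
    have ha'' : a' = a / g := by rw [ha', Int.mul_ediv_cancel_left _ hgpos.ne']
    have hb'' : b' = b / g := by rw [hb', Int.mul_ediv_cancel_left _ hgpos.ne']
    rw [ha'', hb'', hg']
    exact Int.gcd_div_gcd_div_gcd h1
  -- Bezout
  have hbez : a' * Int.gcdA a' b' + b' * Int.gcdB a' b' = 1 := by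
    have := Int.gcd_eq_gcd_ab a' b'
    rw [hcop] at this
    exact_mod_cast this.symm
  set d : ℤ := Int.gcdA a' b' with hd'
  set c : ℤ := -Int.gcdB a' b' with hc'
  have hBez : a' * d - b' * c = 1 := by rw [hd', hc']; linarith [hbez]
  set w : Pt := (a' : ℝ) • v₁ + (b' : ℝ) • v₂ with hw'
  set u : Pt := (c : ℝ) • v₁ + (d : ℝ) • v₂ with hu'
  have hw0g : (a : ℝ) • v₁ + (b : ℝ) • v₂ = (g : ℝ) • w := by
    rw [hw', ha', hb']
    push_cast
    module
  have hwne : w ≠ 0 := by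
    intro hw0
    apply hw0ne
    rw [hw0g, hw0, smul_zero]
  have hwle : ‖w‖ ≤ 1 := by
    have hn : ‖(a : ℝ) • v₁ + (b : ℝ) • v₂‖ = (g:ℝ) * ‖w‖ := by
      rw [hw0g, norm_smul, Real.norm_eq_abs, abs_of_pos (by exact_mod_cast hgpos)]
    have hg1 : (1:ℝ) ≤ (g:ℝ) := by exact_mod_cast hgpos
    nlinarith [norm_nonneg w, hw0le, hn]
  have hBezR : (a':ℝ) * (d:ℝ) - (b':ℝ) * (c:ℝ) = 1 := by exact_mod_cast hBez
  have hgen : ∀ p ∈ lattice v₁ v₂, ∃ m k : ℤ, p = (m : ℝ) • w + (k : ℝ) • u := by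
    rintro p ⟨α, β, rfl⟩
    refine ⟨α * d - β * c, β * a' - α * b', ?_⟩
    rw [hw', hu']
    push_cast
    match_scalars
    · linear_combination (-(α : ℝ)) * hBezR
    · linear_combination (-(β : ℝ)) * hBezR
  have hDet : w 0 * u 1 - w 1 * u 0 = v₁ 0 * v₂ 1 - v₁ 1 * v₂ 0 := by
    have e1 : w 0 = (a':ℝ) * v₁ 0 + (b':ℝ) * v₂ 0 := rfl
    have e2 : w 1 = (a':ℝ) * v₁ 1 + (b':ℝ) * v₂ 1 := rfl
    have e3 : u 0 = (c:ℝ) * v₁ 0 + (d:ℝ) * v₂ 0 := rfl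
    have e4 : u 1 = (c:ℝ) * v₁ 1 + (d:ℝ) * v₂ 1 := rfl
    rw [e1, e2, e3, e4]
    linear_combination (v₁ 0 * v₂ 1 - v₁ 1 * v₂ 0) * hBezR
  rcases le_or_gt 0 (v₁ 0 * v₂ 1 - v₁ 1 * v₂ 0) with hsgn | hsgn
  · exact ⟨w, u, hwle, hwne, hgen, by rw [hDet, abs_of_nonneg hsgn]⟩
  · refine ⟨w, -u, hwle, hwne, ?_, ?_⟩
    · intro p hp
      obtain ⟨m, k, hmk⟩ := hgen p hp
      exact ⟨m, -k, by rw [hmk]; push_cast; module⟩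
    · have e5 : (-u) 0 = -(u 0) := rfl
      have e6 : (-u) 1 = -(u 1) := rfl
      rw [e5, e6, abs_of_neg hsgn]
      linarith [hDet]


/-- For a lattice covering of the plane by unit disks such that some nonzero lattice vector has
norm at most 1 (i.e. each disk contains the centers of at least two other disks), the lower
density is at least `2π/(2+√3)`. -/
theorem lattice_lower_density_ge (v₁ v₂ : Pt)
    (hli : LinearIndependent ℝ ![v₁, v₂])
    (hcover : (⋃ p ∈ lattice v₁ v₂, closedBall p 1) = Set.univ)
    (hshort : ∃ w ∈ lattice v₁ v₂, w ≠ 0 ∧ ‖w‖ ≤ 1) :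
    ENNReal.ofReal (2 * π / (2 + Real.sqrt 3)) ≤
      Filter.liminf
        (fun l : ℝ => NcountLat v₁ v₂ l * ENNReal.ofReal π / ENNReal.ofReal (4 * l ^ 2))
        Filter.atTop := by
  have hdetne := det_ne_zero_of_li v₁ v₂ hli
  set dt : ℝ := |v₁ 0 * v₂ 1 - v₁ 1 * v₂ 0| with hdt'
  have hdetpos : 0 < dt := abs_pos.mpr hdetne
  have hshort' : ∃ w ∈ lattice v₁ v₂, w ≠ 0 ∧ ‖w‖ ≤ 1 := hshort
  obtain ⟨w, u, hwle, hwne, hgen, hdet⟩ := exists_prim v₁ v₂ hshort' hdetpos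
  have hdtle : dt ≤ (2 + Real.sqrt 3) / 2 :=
    det_le_of_cover v₁ v₂ w u hcover hwle hwne hgen hdet hdetpos
  set D : ℝ := ‖v₁‖ + ‖v₂‖ with hD'
  have hD0 : 0 ≤ D := by positivity
  have hsqrt3 : (0:ℝ) < 2 + Real.sqrt 3 := by positivity
  set c : ℝ := 2 * π / (2 + Real.sqrt 3) with hc'
  have hcle : c ≤ π / dt := by
    rw [hc', show 2 * π / (2 + Real.sqrt 3) = π / ((2 + Real.sqrt 3)/2) by
      rw [div_div_eq_mul_div]; ring]
    exact div_le_div_of_nonneg_left Real.pi_pos.le hdetpos hdtle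
  rw [le_liminf_iff]
  intro bb hbb
  have hbbne : bb ≠ ⊤ := hbb.ne_top
  have hβ : bb.toReal < π / dt :=
    lt_of_lt_of_le ((ENNReal.lt_ofReal_iff_toReal_lt hbbne).mp hbb) hcle
  -- tendsto statement
  have h1 : Tendsto (fun l : ℝ => D / l) atTop (nhds 0) :=
    tendsto_const_nhds.div_atTop tendsto_id
  have h2 : Tendsto (fun l : ℝ => 1 - D / l) atTop (nhds 1) := by
    simpa using tendsto_const_nhds.sub h1
  have h3 : Tendsto (fun l : ℝ => (1 - D / l)^2) atTop (nhds 1) := by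
    simpa using h2.pow 2
  have htend : Tendsto (fun l : ℝ => (π / dt) * (1 - D / l)^2) atTop (nhds (π / dt)) := by
    simpa using tendsto_const_nhds.mul h3
  have hev1 : ∀ᶠ l in atTop, bb.toReal < (π / dt) * (1 - D / l)^2 :=
    htend.eventually (eventually_gt_nhds hβ)
  filter_upwards [hev1, eventually_ge_atTop (max D 1)] with l hgl hlge
  have hl1 : (1:ℝ) ≤ l := le_trans (le_max_right D 1) hlge
  have hl0 : (0:ℝ) < l := lt_of_lt_of_le one_pos hl1
  have hlD : D ≤ l := le_trans (le_max_left D 1) hlge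
  have heq : (π / dt) * (1 - D / l)^2 = 4*(l - D)^2 * (π / dt) / (4*l^2) := by
    field_simp
  rw [heq] at hgl
  have hcount := count_lower v₁ v₂ hli l hlD hdetpos
  rw [← hdt'] at hcount
  -- bb < ofReal (4(l-D)^2 * (π/dt) / (4l^2)) ≤ N * ofReal π / ofReal (4l^2)
  refine lt_of_lt_of_le ((ENNReal.lt_ofReal_iff_toReal_lt hbbne).mpr hgl) ?_
  have h4l0 : (0:ℝ) < 4*l^2 := by positivity
  rw [ENNReal.ofReal_div_of_pos h4l0]
  apply ENNReal.div_le_div_right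
  calc ENNReal.ofReal (4*(l - D)^2 * (π / dt))
      = ENNReal.ofReal (4*(l - D)^2) * ENNReal.ofReal (π / dt) :=
        ENNReal.ofReal_mul (by positivity)
    _ ≤ (NcountLat v₁ v₂ l * ENNReal.ofReal dt) * ENNReal.ofReal (π / dt) :=
        mul_le_mul_left hcount _
    _ = NcountLat v₁ v₂ l * ENNReal.ofReal (dt * (π / dt)) := by
        rw [mul_assoc, ← ENNReal.ofReal_mul hdetpos.le]
    _ = NcountLat v₁ v₂ l * ENNReal.ofReal π := by
        rw [show dt * (π / dt) = π by field_simp]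
end
end

section
/- Let Π ⊆ ℝ² be a convex polytope (the convex hull of a finite set) and let C₁, …, C_N ∈ ℝ² be pairwise distinct points such that Π ⊆ ⋃ₙ closedBall(Cₙ, 1). Then there exist sets P₁, …, P_N ⊆ ℝ², each of which is a convex polytope (the convex hull of a finite set, possibly the empty set), such that: (i) Pₙ ⊆ closedBall(Cₙ, 1) for every n; (ii) ⋃ₙ Pₙ = Π; and (iii) interior(Pₙ) ∩ interior(Pₘ) = ∅ whenever n ≠ m. -/
open Metric Finset

noncomputable section

namespace VoronoiAux

local instance : DecidableEq Pt := Classical.decEq _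

/-- The point on segment `[a, b]` at level `c` of the linear functional `f`. -/
def cutpt (f : Pt →ₗ[ℝ] ℝ) (c : ℝ) (b a : Pt) : Pt :=
  a + ((c - f a) / (f b - f a)) • (b - a)

lemma cutpt_mem_segment (f : Pt →ₗ[ℝ] ℝ) (c : ℝ) {a b : Pt} (ha : f a ≤ c) (hb : c < f b) :
    cutpt f c b a ∈ segment ℝ a b := by
  rw [segment_eq_image']
  refine ⟨(c - f a) / (f b - f a), ⟨?_, ?_⟩, rfl⟩
  · exact div_nonneg (by linarith) (by linarith)
  · rw [div_le_one (by linarith)]; linarith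

lemma f_cutpt (f : Pt →ₗ[ℝ] ℝ) (c : ℝ) {a b : Pt} (ha : f a ≤ c) (hb : c < f b) :
    f (cutpt f c b a) = c := by
  have h : f b - f a ≠ 0 := ne_of_gt (by linarith)
  simp only [cutpt, map_add, map_smul, map_sub, smul_eq_mul]
  field_simp
  ring

lemma cutpt_self (f : Pt →ₗ[ℝ] ℝ) (c : ℝ) {a : Pt} (b : Pt) (ha : f a = c) :
    cutpt f c b a = a := by
  simp [cutpt, ha]

/-- Generators of the cut polytope. -/
def cutGen (f : Pt →ₗ[ℝ] ℝ) (c : ℝ) (F : Finset Pt) : Finset Pt :=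
  F.filter (fun a => f a ≤ c) ∪
    ((F.filter (fun a => f a ≤ c)) ×ˢ (F.filter (fun b => c < f b))).image
      (fun q => cutpt f c q.2 q.1)

lemma cutGen_subset (f : Pt →ₗ[ℝ] ℝ) (c : ℝ) (F : Finset Pt) :
    (cutGen f c F : Set Pt) ⊆ convexHull ℝ (F : Set Pt) ∩ {x | f x ≤ c} := by
  intro x hx
  simp only [cutGen, coe_union, Set.mem_union, mem_coe, Finset.mem_filter,
    Finset.mem_image, Finset.mem_product] at hx
  rcases hx with h | ⟨⟨a, b⟩, ⟨⟨haF, hac⟩, hbF, hbc⟩, rfl⟩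
  · exact ⟨subset_convexHull ℝ _ h.1, h.2⟩
  · refine ⟨?_, le_of_eq (f_cutpt f c hac hbc)⟩
    exact (convex_convexHull ℝ (F : Set Pt)).segment_subset
      (subset_convexHull ℝ _ haF) (subset_convexHull ℝ _ hbF)
      (cutpt_mem_segment f c hac hbc)

/-- The key step: eliminate one point above the cut. -/
lemma step (f : Pt →ₗ[ℝ] ℝ) (c : ℝ) (F : Finset Pt) (b : Pt) (hbF : b ∈ F) (hbc : c < f b)
    {x : Pt} (hx : x ∈ convexHull ℝ (F : Set Pt)) (hxc : f x ≤ c) :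
    x ∈ convexHull ℝ ((F.erase b ∪ (F.filter (fun a => f a ≤ c)).image (cutpt f c b) : Finset Pt)
      : Set Pt) := by
  set S' : Finset Pt := F.erase b ∪ (F.filter (fun a => f a ≤ c)).image (cutpt f c b) with hS'
  obtain ⟨w, hw0, hw1, hwx⟩ := Finset.mem_convexHull'.mp hx
  set A : Finset Pt := F.filter (fun a => f a ≤ c) with hA
  have hbA : b ∉ A := by simp [hA, not_le.mpr hbc]
  have hsum_erase : ∑ s ∈ F.erase b, w s = 1 - w b := by
    have h := Finset.add_sum_erase F w hbF
    rw [hw1] at h; linarith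
  have hx_erase : ∑ s ∈ F.erase b, w s • s = x - w b • b := by
    have h := Finset.add_sum_erase F (fun s => w s • s) hbF
    rw [hwx] at h
    exact eq_sub_of_add_eq' h
  by_cases hμ : w b = 0
  · apply convexHull_mono (show (F.erase b : Set Pt) ⊆ (S' : Set Pt) by
      intro s hs; simp only [hS', coe_union, Set.mem_union]; exact Or.inl hs)
    refine Finset.mem_convexHull'.mpr ⟨w, fun y hy => hw0 y (Finset.mem_of_mem_erase hy), ?_, ?_⟩
    · rw [hsum_erase, hμ]; ring
    · rw [hx_erase, hμ]; simp
  · have hμpos : 0 < w b := lt_of_le_of_ne (hw0 b hbF) (Ne.symm hμ)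
    set D : ℝ := ∑ a ∈ A, w a * (c - f a) with hD
    have hfx : ∑ s ∈ F, w s * f s = f x := by
      rw [← hwx, map_sum]
      exact Finset.sum_congr rfl fun s _ => by rw [map_smul, smul_eq_mul]
    have hkey : w b * (f b - c) ≤ D := by
      have h1 : 0 ≤ ∑ s ∈ F, w s * (c - f s) := by
        have : ∑ s ∈ F, w s * (c - f s) = c - f x := by
          rw [Finset.sum_congr rfl (fun s _ => by ring : ∀ s ∈ F, w s * (c - f s)
            = c * w s - w s * f s), Finset.sum_sub_distrib, ← Finset.mul_sum, hw1, hfx]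
          ring
        linarith [this]
      have hsplit : ∑ s ∈ F, w s * (c - f s)
          = D + ∑ s ∈ F.filter (fun s => ¬ f s ≤ c), w s * (c - f s) := by
        rw [hD, hA, Finset.sum_filter_add_sum_filter_not]
      have hbmem : b ∈ F.filter (fun s => ¬ f s ≤ c) := by
        rw [Finset.mem_filter]; exact ⟨hbF, not_le.mpr hbc⟩
      have h2 : ∑ s ∈ F.filter (fun s => ¬ f s ≤ c), w s * (c - f s) ≤ w b * (c - f b) := by
        have h3 : w b * (c - f b) + ∑ s ∈ (F.filter (fun s => ¬ f s ≤ c)).erase b,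
            w s * (c - f s) = ∑ s ∈ F.filter (fun s => ¬ f s ≤ c), w s * (c - f s) :=
          Finset.add_sum_erase _ (fun s => w s * (c - f s)) hbmem
        have h4 : ∑ s ∈ (F.filter (fun s => ¬ f s ≤ c)).erase b, w s * (c - f s) ≤ 0 := by
          apply Finset.sum_nonpos
          intro s hs
          have hsF := Finset.mem_of_mem_erase hs
          rw [Finset.mem_filter] at hsF
          have := hw0 s hsF.1
          have : c - f s ≤ 0 := by linarith [not_le.mp hsF.2]
          nlinarith [hw0 s hsF.1]
        linarith [h3]
      nlinarith [h1, hsplit, h2]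
    have hDpos : 0 < D := by nlinarith
    -- weights
    set e : Pt → ℝ := fun a => w b * w a * (f b - c) / D with he
    set q : Pt → ℝ := fun a => w b * w a * (f b - f a) / D with hq
    set m : Pt → ℝ := fun a => w b * w a * (c - f a) / D with hm
    have hAerase : (F.erase b).filter (fun s => f s ≤ c) = A := by
      ext s
      simp only [Finset.mem_filter, Finset.mem_erase, hA]
      constructor
      · rintro ⟨⟨-, h1⟩, h2⟩; exact ⟨h1, h2⟩
      · rintro ⟨h1, h2⟩; exact ⟨⟨fun hsb => by rw [hsb] at h2; linarith, h1⟩, h2⟩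
    have hsum_m : ∑ a ∈ A, m a = w b := by
      have : ∑ a ∈ A, m a = (w b / D) * ∑ a ∈ A, w a * (c - f a) := by
        rw [Finset.mul_sum]
        exact Finset.sum_congr rfl fun a _ => by rw [hm]; ring
      rw [this, ← hD, div_mul_cancel₀ _ (ne_of_gt hDpos)]
    -- the convex combination
    set t : Finset (Pt ⊕ Pt) := (F.erase b).disjSum A with ht
    set z : Pt ⊕ Pt → Pt := Sum.elim id (cutpt f c b) with hz
    set ω : Pt ⊕ Pt → ℝ := Sum.elim (fun s => w s - if f s ≤ c then e s else 0) q with hω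
    have hω0 : ∀ i ∈ t, 0 ≤ ω i := by
      rintro (s | a) hi
      · rw [ht, Finset.inl_mem_disjSum] at hi
        have hsF : s ∈ F := Finset.mem_of_mem_erase hi
        simp only [hω, Sum.elim_inl]
        split_ifs with hfs
        · have hwpos := hw0 s hsF
          have h5 : e s = w s * (w b * (f b - c) / D) := by rw [he]; ring
          have h6 : w b * (f b - c) / D ≤ 1 := (div_le_one hDpos).mpr hkey
          nlinarith
        · simp [hw0 s hsF]
      · rw [ht, Finset.inr_mem_disjSum] at hi
        rw [hA, Finset.mem_filter] at hi
        simp only [hω, Sum.elim_inr, hq]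
        have h8 := hw0 a hi.1
        have h9 : 0 ≤ f b - f a := by linarith [hi.2]
        positivity
    have hite : ∑ s ∈ F.erase b, (if f s ≤ c then e s else 0) = ∑ a ∈ A, e a := by
      rw [← Finset.sum_filter, hAerase]
    have hite' : ∑ s ∈ F.erase b, (if f s ≤ c then e s else 0) • s = ∑ a ∈ A, e a • a := by
      have : ∀ s, (if f s ≤ c then e s else 0) • s = (if f s ≤ c then e s • s else 0) := by
        intro s; split_ifs <;> simp
      rw [Finset.sum_congr rfl fun s _ => this s, ← Finset.sum_filter, hAerase]
    have hωsum : ∑ i ∈ t, ω i = 1 := by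
      rw [ht, Finset.sum_disjSum]
      simp only [hω, Sum.elim_inl, Sum.elim_inr]
      rw [Finset.sum_sub_distrib, hite, hsum_erase]
      have hqe : ∑ a ∈ A, q a - ∑ a ∈ A, e a = ∑ a ∈ A, m a := by
        rw [← Finset.sum_sub_distrib]
        exact Finset.sum_congr rfl fun a _ => by rw [hq, he, hm]; ring
      have := hsum_m
      linarith [hqe]
    have hcut : ∀ a ∈ A, q a • cutpt f c b a = e a • a + m a • b := by
      intro a ha
      rw [hA, Finset.mem_filter] at ha
      have hfba : f b - f a ≠ 0 := ne_of_gt (by linarith [ha.2])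
      have hqt : q a * ((c - f a) / (f b - f a)) = m a := by
        rw [hq, hm]; field_simp
      rw [cutpt, smul_add, smul_smul, hqt, smul_sub]
      have hqem : q a = e a + m a := by rw [hq, he, hm]; field_simp; ring
      rw [hqem]
      module
    have hcm : ∑ i ∈ t, ω i • z i = x := by
      rw [ht, Finset.sum_disjSum]
      simp only [hω, hz, Sum.elim_inl, Sum.elim_inr, id]
      rw [Finset.sum_congr rfl hcut]
      have h7 : ∑ s ∈ F.erase b, (w s - if f s ≤ c then e s else 0) • s
          = (x - w b • b) - ∑ a ∈ A, e a • a := by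
        rw [Finset.sum_congr rfl (fun s _ => sub_smul _ _ s), Finset.sum_sub_distrib,
          hx_erase, hite']
      rw [h7, Finset.sum_add_distrib, ← Finset.sum_smul, hsum_m]
      abel
    have hzmem : ∀ i ∈ t, z i ∈ (S' : Set Pt) := by
      rintro (s | a) hi
      · rw [ht, Finset.inl_mem_disjSum] at hi
        simp only [hz, Sum.elim_inl, id, hS', Finset.coe_union, Set.mem_union]
        exact Or.inl hi
      · rw [ht, Finset.inr_mem_disjSum] at hi
        simp only [hz, Sum.elim_inr, hS', Finset.coe_union, Set.mem_union]
        right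
        exact Finset.mem_coe.mpr (Finset.mem_image_of_mem _ hi)
    have := Finset.centerMass_mem_convexHull t hω0 (by rw [hωsum]; norm_num) hzmem
    rwa [Finset.centerMass_eq_of_sum_1 _ _ hωsum, hcm] at this

lemma cut_aux (f : Pt →ₗ[ℝ] ℝ) (c : ℝ) :
    ∀ (k : ℕ) (F : Finset Pt), (F.filter fun s => c < f s).card ≤ k →
      convexHull ℝ (F : Set Pt) ∩ {x | f x ≤ c} ⊆ convexHull ℝ ((cutGen f c F : Finset Pt) : Set Pt) := by
  intro k
  induction k with
  | zero =>
    intro F hF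
    have hfilt : F.filter (fun s => c < f s) = ∅ := Finset.card_eq_zero.mp (Nat.le_zero.mp hF)
    have hall : F.filter (fun a => f a ≤ c) = F := by
      apply Finset.filter_true_of_mem
      intro s hs
      by_contra hc
      have : s ∈ F.filter (fun s => c < f s) := Finset.mem_filter.mpr ⟨hs, not_le.mp hc⟩
      simp [hfilt] at this
    rintro x ⟨hx, -⟩
    apply convexHull_mono _ hx
    intro s hs
    simp only [cutGen, coe_union, Set.mem_union, mem_coe]
    exact Or.inl (by rw [hall]; exact hs)
  | succ k ih =>
    intro F hF
    rcases Finset.eq_empty_or_nonempty (F.filter fun s => c < f s) with hfilt | ⟨b, hb⟩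
    · -- same as base case
      have hall : F.filter (fun a => f a ≤ c) = F := by
        apply Finset.filter_true_of_mem
        intro s hs
        by_contra hc
        have : s ∈ F.filter (fun s => c < f s) := Finset.mem_filter.mpr ⟨hs, not_le.mp hc⟩
        simp [hfilt] at this
      rintro x ⟨hx, -⟩
      apply convexHull_mono _ hx
      intro s hs
      simp only [cutGen, coe_union, Set.mem_union, mem_coe]
      exact Or.inl (by rw [hall]; exact hs)
    · rw [Finset.mem_filter] at hb
      obtain ⟨hbF, hbc⟩ := hb
      rintro x ⟨hx, hxc⟩
      set S' : Finset Pt := F.erase b ∪ (F.filter (fun a => f a ≤ c)).image (cutpt f c b)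
        with hS'
      have hxS' : x ∈ convexHull ℝ (S' : Set Pt) := step f c F b hbF hbc hx hxc
      -- card bound for S'
      have hsub : S'.filter (fun s => c < f s) ⊆ (F.filter (fun s => c < f s)).erase b := by
        intro s hs
        rw [Finset.mem_filter] at hs
        obtain ⟨hsS', hsc⟩ := hs
        rw [hS', Finset.mem_union] at hsS'
        rcases hsS' with h | h
        · rw [Finset.mem_erase] at h
          exact Finset.mem_erase.mpr ⟨h.1, Finset.mem_filter.mpr ⟨h.2, hsc⟩⟩
        · exfalso
          obtain ⟨a, ha, rfl⟩ := Finset.mem_image.mp h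
          rw [Finset.mem_filter] at ha
          have := f_cutpt f c ha.2 hbc
          linarith [hsc, this]
      have hcard : (S'.filter (fun s => c < f s)).card ≤ k := by
        have h1 := Finset.card_le_card hsub
        have h2 : ((F.filter (fun s => c < f s)).erase b).card
            = (F.filter (fun s => c < f s)).card - 1 :=
          Finset.card_erase_of_mem (Finset.mem_filter.mpr ⟨hbF, hbc⟩)
        have h3 : 1 ≤ (F.filter (fun s => c < f s)).card :=
          Finset.card_pos.mpr ⟨b, Finset.mem_filter.mpr ⟨hbF, hbc⟩⟩
        omega
      have hx2 : x ∈ convexHull ℝ ((cutGen f c S' : Finset Pt) : Set Pt) :=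
        ih S' hcard ⟨hxS', hxc⟩
      -- cutGen f c S' ⊆ cutGen f c F
      refine convexHull_mono ?_ hx2
      intro s hs
      rw [mem_coe] at hs ⊢
      simp only [cutGen, Finset.mem_union, Finset.mem_filter, Finset.mem_image,
        Finset.mem_product] at hs ⊢
      rcases hs with ⟨hsS', hsc⟩ | ⟨⟨a', b'⟩, ⟨⟨ha'S, ha'c⟩, hb'S, hb'c⟩, rfl⟩
      · -- s ∈ S' with f s ≤ c
        rw [hS', Finset.mem_union] at hsS'
        rcases hsS' with h | h
        · exact Or.inl ⟨Finset.mem_of_mem_erase h, hsc⟩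
        · obtain ⟨a, ha, rfl⟩ := Finset.mem_image.mp h
          rw [Finset.mem_filter] at ha
          exact Or.inr ⟨⟨a, b⟩, ⟨⟨ha.1, ha.2⟩, hbF, hbc⟩, rfl⟩
      · -- a pair from S'
        have hb'F : b' ∈ F.erase b := by
          rw [hS', Finset.mem_union] at hb'S
          rcases hb'S with h | h
          · exact h
          · exfalso
            obtain ⟨a, ha, rfl⟩ := Finset.mem_image.mp h
            rw [Finset.mem_filter] at ha
            have := f_cutpt f c ha.2 hbc
            linarith
        rw [hS', Finset.mem_union] at ha'S
        rcases ha'S with h | h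
        · exact Or.inr ⟨⟨a', b'⟩, ⟨⟨Finset.mem_of_mem_erase h, ha'c⟩,
            Finset.mem_of_mem_erase hb'F, hb'c⟩, rfl⟩
        · obtain ⟨a, ha, rfl⟩ := Finset.mem_image.mp h
          rw [Finset.mem_filter] at ha
          have hfa' : f (cutpt f c b a) = c := f_cutpt f c ha.2 hbc
          rw [cutpt_self f c b' hfa']
          exact Or.inr ⟨⟨a, b⟩, ⟨⟨ha.1, ha.2⟩, hbF, hbc⟩, rfl⟩

/-- Cutting a polytope by a half-space yields a polytope. -/
lemma cut (F : Finset Pt) (f : Pt →ₗ[ℝ] ℝ) (c : ℝ) :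
    ∃ G : Finset Pt, convexHull ℝ (F : Set Pt) ∩ {x | f x ≤ c}
      = convexHull ℝ (G : Set Pt) := by
  refine ⟨cutGen f c F, Set.Subset.antisymm (cut_aux f c _ F le_rfl) ?_⟩
  refine convexHull_min (cutGen_subset f c F) ?_
  exact (convex_convexHull ℝ (F : Set Pt)).inter (convex_halfSpace_le f.isLinear c)

/-- Cutting a polytope by finitely many half-spaces yields a polytope. -/
lemma cuts (F : Finset Pt) {ι : Type*} [DecidableEq ι] (T : Finset ι)
    (g : ι → Pt →ₗ[ℝ] ℝ) (r : ι → ℝ) :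
    ∃ G : Finset Pt, convexHull ℝ (F : Set Pt) ∩ (⋂ m ∈ T, {x | g m x ≤ r m})
      = convexHull ℝ (G : Set Pt) := by
  induction T using Finset.induction_on with
  | empty => exact ⟨F, by simp⟩
  | insert a T hnotmem ihT =>
    obtain ⟨G, hG⟩ := ihT
    obtain ⟨G', hG'⟩ := cut G (g a) (r a)
    refine ⟨G', ?_⟩
    rw [Finset.set_biInter_insert, ← Set.inter_assoc, Set.inter_right_comm, hG, hG']

/-- Points in the interior of a set contained in a half-space satisfy the strict inequality. -/
lemma interior_lt {P : Set Pt} {v : Pt} (hv : v ≠ 0) {r : ℝ}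
    (hP : P ⊆ {x | inner ℝ v x ≤ r}) {x : Pt} (hx : x ∈ interior P) :
    (inner ℝ v x : ℝ) < r := by
  obtain ⟨ε, hε, hball⟩ := Metric.mem_nhds_iff.mp (mem_interior_iff_mem_nhds.mp hx)
  have hvn : 0 < ‖v‖ := norm_pos_iff.mpr hv
  set s : ℝ := ε / (2 * ‖v‖) with hs
  have hspos : 0 < s := by positivity
  have hsv : s * ‖v‖ = ε / 2 := by rw [hs]; field_simp
  have hy : x + s • v ∈ Metric.ball x ε := by
    rw [Metric.mem_ball, dist_eq_norm, add_sub_cancel_left, norm_smul,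
      Real.norm_eq_abs, abs_of_pos hspos, hsv]
    linarith
  have h1 : (inner ℝ v (x + s • v) : ℝ) ≤ r := hP (hball hy)
  rw [inner_add_right, real_inner_smul_right, real_inner_self_eq_norm_sq] at h1
  nlinarith [mul_pos hspos (pow_pos hvn 2)]

theorem dist_iff (Cn Cm x : Pt) :
    dist x Cn ≤ dist x Cm ↔ (inner ℝ (Cm - Cn) x : ℝ) ≤ (‖Cm‖ ^ 2 - ‖Cn‖ ^ 2) / 2 := by
  have h1 : ‖x - Cn‖ ^ 2 = ‖x‖ ^ 2 - 2 * (inner ℝ x Cn : ℝ) + ‖Cn‖ ^ 2 := norm_sub_sq_real x Cn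
  have h2 : ‖x - Cm‖ ^ 2 = ‖x‖ ^ 2 - 2 * (inner ℝ x Cm : ℝ) + ‖Cm‖ ^ 2 := norm_sub_sq_real x Cm
  have h3 : (inner ℝ (Cm - Cn) x : ℝ) = (inner ℝ x Cm : ℝ) - (inner ℝ x Cn : ℝ) := by
    rw [inner_sub_left, real_inner_comm Cm x, real_inner_comm Cn x]
  rw [dist_eq_norm, dist_eq_norm]
  constructor
  · intro h
    have := pow_le_pow_left₀ (norm_nonneg _) h 2
    nlinarith
  · intro h
    nlinarith [norm_nonneg (x - Cn), norm_nonneg (x - Cm)]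

end VoronoiAux

open VoronoiAux in
/-- Voronoi-cell decomposition: a convex polytope covered by finitely many unit disks with
pairwise distinct centers can be partitioned into convex polytopes, one inside each disk, with
pairwise disjoint interiors. -/
theorem voronoi_decomposition (F : Finset Pt) (N : ℕ) (C : Fin N → Pt)
    (hinj : Function.Injective C)
    (hcover : convexHull ℝ (F : Set Pt) ⊆ ⋃ i, closedBall (C i) 1) :
    ∃ P : Fin N → Set Pt,
      (∀ n, ∃ G : Finset Pt, P n = convexHull ℝ (G : Set Pt)) ∧
      (∀ n, P n ⊆ closedBall (C n) 1) ∧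
      (⋃ n, P n) = convexHull ℝ (F : Set Pt) ∧
      (∀ n m, n ≠ m → interior (P n) ∩ interior (P m) = ∅) := by
  classical
  -- the linear functionals defining the Voronoi cells
  set g : Fin N → Fin N → (Pt →ₗ[ℝ] ℝ) := fun n m => (innerₛₗ ℝ (C m - C n)) with hg
  set r : Fin N → Fin N → ℝ := fun n m => (‖C m‖ ^ 2 - ‖C n‖ ^ 2) / 2 with hr
  set P : Fin N → Set Pt := fun n =>
    convexHull ℝ (F : Set Pt) ∩ ⋂ m ∈ (Finset.univ : Finset (Fin N)), {x | g n m x ≤ r n m}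
    with hP
  have hmem : ∀ n x, x ∈ P n ↔ x ∈ convexHull ℝ (F : Set Pt) ∧
      ∀ m, dist x (C n) ≤ dist x (C m) := by
    intro n x
    simp only [hP, Set.mem_inter_iff, Set.mem_iInter, Set.mem_setOf_eq, Finset.mem_univ,
      forall_const]
    constructor
    · rintro ⟨h1, h2⟩
      exact ⟨h1, fun m => (dist_iff (C n) (C m) x).mpr (h2 m)⟩
    · rintro ⟨h1, h2⟩
      exact ⟨h1, fun m => (dist_iff (C n) (C m) x).mp (h2 m)⟩
  refine ⟨P, ?_, ?_, ?_, ?_⟩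
  · intro n
    obtain ⟨G, hG⟩ := cuts F Finset.univ (g n) (r n)
    exact ⟨G, hG⟩
  · intro n x hx
    rw [hmem] at hx
    obtain ⟨hx1, hx2⟩ := hx
    obtain ⟨_, ⟨m, rfl⟩, hm⟩ := hcover hx1
    rw [Metric.mem_closedBall] at hm ⊢
    exact le_trans (hx2 m) hm
  · apply Set.Subset.antisymm
    · exact Set.iUnion_subset fun n => Set.inter_subset_left
    · intro x hx
      obtain ⟨_, ⟨i, rfl⟩, -⟩ := hcover hx
      obtain ⟨n, -, hn⟩ := Finset.exists_min_image Finset.univ (fun m => dist x (C m))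
        ⟨i, Finset.mem_univ i⟩
      exact Set.mem_iUnion.mpr ⟨n, (hmem n x).mpr ⟨hx, fun m => hn m (Finset.mem_univ m)⟩⟩
  · intro n m hnm
    rw [Set.eq_empty_iff_forall_notMem]
    rintro x ⟨hxn, hxm⟩
    have hv : C m - C n ≠ 0 := sub_ne_zero.mpr fun h => hnm (hinj h).symm
    have hPn : P n ⊆ {y | (inner ℝ (C m - C n) y : ℝ) ≤ r n m} := by
      intro y hy
      rw [hmem] at hy
      exact (dist_iff (C n) (C m) y).mp (hy.2 m)
    have hPm : P m ⊆ {y | (inner ℝ (C n - C m) y : ℝ) ≤ r m n} := by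
      intro y hy
      rw [hmem] at hy
      exact (dist_iff (C m) (C n) y).mp (hy.2 n)
    have h1 := interior_lt hv hPn hxn
    have hv' : C n - C m ≠ 0 := fun h => hv (by
      have : C m - C n = -(C n - C m) := by abel
      rw [this, h, neg_zero])
    have h2 := interior_lt hv' hPm hxm
    have h3 : (inner ℝ (C n - C m) x : ℝ) = -(inner ℝ (C m - C n) x : ℝ) := by
      rw [← inner_neg_left]; congr 1; abel
    rw [h3] at h2
    have hrr : r m n = -(r n m) := by rw [hr]; ring
    rw [hrr] at h2
    linarith
end
end

section
/- Let C : ℕ → ℝ² satisfy: (i) ⋃ₙ closedBall(C n, 1) = ℝ²; and (ii) for every n ≥ 1, 0 < dist(C n, C (n−1)) ≤ 1 (each disk contains the center of the next disk). Then liminf_{λ→∞} N_C(λ)·π/(4λ²) ≥ π/(π/3 + √3/2), the liminf being computed in the extended nonnegative reals. (No restriction on the turning angles is assumed here.) -/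
open Metric MeasureTheory Filter Real
open scoped ENNReal

noncomputable section

/-- `N_C(λ)`: the extended number of indices `i` such that the closed unit ball centered at
`C i` meets the open square `(−λ,λ) × (−λ,λ)`. -/
def Ncount {ι : Type*} (C : ι → Pt) (l : ℝ) : ℝ≥0∞ :=
  ({i | (closedBall (C i) 1 ∩ openSquare l).Nonempty}.encard : ℕ∞)

/-- The lower density `liminf_{λ→∞} N_C(λ)·π/(4λ²)` of the family of unit disks centered at
the points `C i`, computed in `ℝ≥0∞`. -/
def lowerDensity {ι : Type*} (C : ι → Pt) : ℝ≥0∞ :=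
  Filter.liminf (fun l : ℝ => Ncount C l * ENNReal.ofReal π / ENNReal.ofReal (4 * l ^ 2))
    Filter.atTop

lemma sqrt_int (a b : ℝ) (ha : -(π/2) ≤ a) (hb : b ≤ π/2) (hab : a ≤ b) :
    ∫ x in Real.sin a..Real.sin b, Real.sqrt (1 - x^2)
      = (Real.cos b * Real.sin b - Real.cos a * Real.sin a + b - a)/2 := by
  rw [← intervalIntegral.integral_comp_smul_deriv (f := Real.sin) (f' := Real.cos)
    (g := fun x => Real.sqrt (1 - x^2))
    (fun x _ => Real.hasDerivAt_sin x) Real.continuous_cos.continuousOn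
    (by continuity)]
  rw [← integral_cos_sq]
  apply intervalIntegral.integral_congr
  intro x hx
  rw [Set.uIcc_of_le hab] at hx
  have hcos : 0 ≤ Real.cos x := Real.cos_nonneg_of_mem_Icc ⟨le_trans ha hx.1, le_trans hx.2 hb⟩
  have h1 : Real.sqrt (1 - Real.sin x ^ 2) = Real.cos x := by
    rw [show (1 : ℝ) - Real.sin x ^ 2 = Real.cos x ^ 2 from (Real.cos_sq' x).symm]
    exact Real.sqrt_sq hcos
  simp only [smul_eq_mul, Function.comp_apply]; rw [h1, sq]

lemma int_half_one : ∫ x in (1/2 : ℝ)..1, Real.sqrt (1 - x^2) = π/6 - Real.sqrt 3 / 8 := by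
  have := sqrt_int (π/6) (π/2) (by linarith [Real.pi_pos]) le_rfl (by linarith [Real.pi_pos])
  rw [Real.sin_pi_div_six, Real.sin_pi_div_two, Real.cos_pi_div_two, Real.cos_pi_div_six] at this
  rw [this]; ring

lemma int_neg : ∫ x in (-1 : ℝ)..(-(1/2)), Real.sqrt (1 - x^2) = π/6 - Real.sqrt 3 / 8 := by
  have := sqrt_int (-(π/2)) (-(π/6)) le_rfl (by linarith [Real.pi_pos]) (by linarith [Real.pi_pos])
  rw [Real.sin_neg, Real.sin_neg, Real.cos_neg, Real.cos_neg, Real.sin_pi_div_six,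
    Real.sin_pi_div_two, Real.cos_pi_div_two, Real.cos_pi_div_six] at this
  rw [this]; ring

def gfun (x : ℝ) : ℝ := min (Real.sqrt (1 - x^2)) (Real.sqrt (2*x - x^2))

lemma gfun_cont : Continuous gfun := by
  apply Continuous.min <;> exact (Real.continuous_sqrt.comp (by continuity))

lemma gfun_nonneg (x : ℝ) : 0 ≤ gfun x := le_min (Real.sqrt_nonneg _) (Real.sqrt_nonneg _)

lemma int_gfun : ∫ x in (0:ℝ)..1, 2 * gfun x = 2*π/3 - Real.sqrt 3 / 2 := by
  have hint : ∀ a b : ℝ, IntervalIntegrable (fun x => 2 * gfun x) MeasureTheory.volume a b :=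
    fun a b => ((continuous_const.mul gfun_cont).intervalIntegrable a b)
  rw [← intervalIntegral.integral_add_adjacent_intervals (a := 0) (b := 1/2) (c := 1)
    (hint 0 (1/2)) (hint (1/2) 1)]
  have h1 : ∫ x in (0:ℝ)..(1/2), 2 * gfun x = ∫ x in (0:ℝ)..(1/2), 2 * Real.sqrt (1 - (x-1)^2) := by
    apply intervalIntegral.integral_congr
    intro x hx
    rw [Set.uIcc_of_le (by norm_num)] at hx
    have h2 : (2*x - x^2 : ℝ) ≤ 1 - x^2 := by nlinarith [hx.1, hx.2]
    simp only [gfun, min_eq_right (Real.sqrt_le_sqrt h2)]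
    congr 2
    ring
  have h2 : ∫ x in (1/2:ℝ)..1, 2 * gfun x = ∫ x in (1/2:ℝ)..1, 2 * Real.sqrt (1 - x^2) := by
    apply intervalIntegral.integral_congr
    intro x hx
    rw [Set.uIcc_of_le (by norm_num)] at hx
    have h2 : (1 - x^2 : ℝ) ≤ 2*x - x^2 := by nlinarith [hx.1, hx.2]
    simp only [gfun, min_eq_left (Real.sqrt_le_sqrt h2)]
  rw [h1, h2]
  rw [intervalIntegral.integral_const_mul, intervalIntegral.integral_const_mul]
  rw [intervalIntegral.integral_comp_sub_right (fun x => Real.sqrt (1 - x^2)) 1]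
  norm_num
  rw [int_neg, int_half_one]
  ring

def ψ : Pt ≃ᵐ ℝ × ℝ := (MeasurableEquiv.toLp 2 (Fin 2 → ℝ)).symm.trans (MeasurableEquiv.finTwoArrow)

lemma ψ_mp : MeasurePreserving ψ volume volume :=
  (EuclideanSpace.volume_preserving_symm_measurableEquiv_toLp (Fin 2)).trans (volume_preserving_finTwoArrow ℝ)

lemma ψ_apply (p : Pt) : ψ p = (p 0, p 1) := rfl

def ept : Pt := EuclideanSpace.single (0 : Fin 2) (1:ℝ)

example : ‖ept‖ = 1 := by simp [ept, EuclideanSpace.norm_single]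

lemma dist_pt (p q : Pt) : dist p q = Real.sqrt ((p 0 - q 0)^2 + (p 1 - q 1)^2) := by
  rw [EuclideanSpace.dist_eq]
  simp [Fin.sum_univ_two, Real.dist_eq, sq_abs]

lemma mem_cb (p q : Pt) : p ∈ closedBall q 1 ↔ (p 0 - q 0)^2 + (p 1 - q 1)^2 ≤ 1 := by
  have h := Real.sqrt_le_sqrt_iff (x := (p 0 - q 0)^2 + (p 1 - q 1)^2) (y := 1) (by norm_num)
  rw [Real.sqrt_one] at h
  rw [mem_closedBall, dist_pt]
  exact h

lemma ball_area (c : Pt) : volume (closedBall c 1) = ENNReal.ofReal π := by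
  rw [EuclideanSpace.volume_closedBall]
  have h2 : Real.Gamma 2 = 1 := by
    rw [show (2:ℝ) = 1 + 1 by norm_num, Real.Gamma_add_one one_ne_zero, Real.Gamma_one, mul_one]
  simp only [Fintype.card_fin, Nat.cast_ofNat]
  rw [show ((2:ℝ)/2 + 1) = 2 by norm_num, h2, Real.sq_sqrt Real.pi_pos.le]
  simp

lemma lens_lb : ENNReal.ofReal (2*π/3 - Real.sqrt 3/2)
    ≤ volume (closedBall (0:Pt) 1 ∩ closedBall ept 1) := by
  set R : Set (ℝ × ℝ) := regionBetween (-gfun) gfun (Set.Ioo 0 1) with hR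
  have hRmeas : MeasurableSet R :=
    measurableSet_regionBetween gfun_cont.neg.measurable gfun_cont.measurable measurableSet_Ioo
  have hvolR : volume R = ENNReal.ofReal (2*π/3 - Real.sqrt 3/2) := by
    have hint : IntegrableOn gfun (Set.Ioo 0 1) volume :=
      (gfun_cont.integrableOn_Icc (a := 0) (b := 1)).mono_set Set.Ioo_subset_Icc_self
    rw [show (volume : Measure (ℝ × ℝ)) = volume.prod volume from Measure.volume_eq_prod ℝ ℝ]
    rw [hR, volume_regionBetween_eq_integral hint.neg hint measurableSet_Ioo
      (fun x _ => neg_le_self (le_min (Real.sqrt_nonneg _) (Real.sqrt_nonneg _)))]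
    congr 1
    have : ∀ y, (gfun - -gfun) y = 2 * gfun y := by intro y; simp; ring
    rw [MeasureTheory.integral_congr_ae (Filter.Eventually.of_forall (fun y => this y))]
    rw [← MeasureTheory.integral_Ioc_eq_integral_Ioo, ← intervalIntegral.integral_of_le
      (by norm_num : (0:ℝ) ≤ 1)]
    exact int_gfun
  have hsub : (ψ ⁻¹' R) ⊆ closedBall (0:Pt) 1 ∩ closedBall ept 1 := by
    intro p hp
    have hp' : p 0 ∈ Set.Ioo (0:ℝ) 1 ∧ p 1 ∈ Set.Ioo (-(gfun (p 0))) (gfun (p 0)) := hp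
    obtain ⟨⟨hx0, hx1⟩, hy1, hy2⟩ := hp'
    set x := p 0; set y := p 1
    have hyabs : |y| < gfun x := abs_lt.mpr ⟨hy1, hy2⟩
    have hysq : ∀ c : ℝ, 0 ≤ c → gfun x ≤ Real.sqrt c → y^2 ≤ c := by
      intro c hc hgc
      have h1 : |y| ≤ Real.sqrt c := le_trans hyabs.le hgc
      calc y^2 = |y|^2 := (sq_abs y).symm
        _ ≤ Real.sqrt c ^ 2 := pow_le_pow_left₀ (abs_nonneg y) h1 2
        _ = c := Real.sq_sqrt hc
    have h1 : y^2 ≤ 1 - x^2 := hysq _ (by nlinarith) (min_le_left _ _)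
    have h2 : y^2 ≤ 2*x - x^2 := hysq _ (by nlinarith) (min_le_right _ _)
    constructor
    · rw [mem_cb]
      simp only [show ((0:Pt)) 0 = 0 from rfl, show ((0:Pt)) 1 = 0 from rfl]
      nlinarith
    · rw [mem_cb]
      simp only [show ept 0 = 1 from by simp [ept, EuclideanSpace.single_apply],
        show ept 1 = 0 from by simp [ept, EuclideanSpace.single_apply]]
      nlinarith
  calc ENNReal.ofReal (2*π/3 - Real.sqrt 3/2) = volume R := hvolR.symm
    _ = volume (ψ ⁻¹' R) := (ψ_mp.measure_preimage hRmeas.nullMeasurableSet).symm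
    _ ≤ _ := measure_mono hsub

lemma sqrt3_lt : Real.sqrt 3 < 2 := by
  have : (0:ℝ) ≤ 2 := by norm_num
  nlinarith [Real.sq_sqrt (show (0:ℝ) ≤ 3 by norm_num), Real.sqrt_nonneg 3]

lemma diff_ub_unit : volume (closedBall (0:Pt) 1 \ closedBall ept 1)
    ≤ ENNReal.ofReal (π/3 + Real.sqrt 3/2) := by
  have hkey : volume (closedBall (0:Pt) 1 \ closedBall ept 1)
      + volume (closedBall (0:Pt) 1 ∩ closedBall ept 1) = volume (closedBall (0:Pt) 1) :=
    measure_diff_add_inter _ measurableSet_closedBall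
  have hfin : volume (closedBall (0:Pt) 1 ∩ closedBall ept 1) ≠ ⊤ := by
    refine ne_of_lt (lt_of_le_of_lt (measure_mono Set.inter_subset_left) ?_)
    rw [ball_area]; exact ENNReal.ofReal_lt_top
  have h2 : ENNReal.ofReal (π/3 + Real.sqrt 3/2) + ENNReal.ofReal (2*π/3 - Real.sqrt 3/2)
      = ENNReal.ofReal π := by
    rw [← ENNReal.ofReal_add (by positivity) (by nlinarith [Real.pi_gt_three, sqrt3_lt])]
    congr 1
    ring
  rw [ball_area] at hkey
  have := lens_lb
  -- volume diff + lens_vol = ofReal π, lens_vol ≥ ofReal(2π/3-√3/2)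
  by_contra hcon
  push_neg at hcon
  have : ENNReal.ofReal π < ENNReal.ofReal π := by
    calc ENNReal.ofReal π = ENNReal.ofReal (π/3 + Real.sqrt 3/2) + ENNReal.ofReal (2*π/3 - Real.sqrt 3/2) := h2.symm
      _ ≤ ENNReal.ofReal (π/3 + Real.sqrt 3/2) + volume (closedBall (0:Pt) 1 ∩ closedBall ept 1) := by gcongr
      _ < volume (closedBall (0:Pt) 1 \ closedBall ept 1) + volume (closedBall (0:Pt) 1 ∩ closedBall ept 1) := by
          exact ENNReal.add_lt_add_right hfin hcon
      _ = ENNReal.ofReal π := hkey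
  exact absurd this (lt_irrefl _)

lemma diff_ub (x y : Pt) (h0 : 0 < dist x y) (h1 : dist x y ≤ 1) :
    volume (closedBall x 1 \ closedBall y 1) ≤ ENNReal.ofReal (π/3 + Real.sqrt 3/2) := by
  set d := dist x y with hd
  set y' : Pt := x + d⁻¹ • (y - x) with hy'
  have hdy' : ‖y' - x‖ = 1 := by
    rw [hy']
    simp only [add_sub_cancel_left, norm_smul, norm_inv, Real.norm_eq_abs,
      abs_of_pos h0]
    rw [show ‖y - x‖ = d from by rw [hd, dist_comm, dist_eq_norm]]
    field_simp
  have hsub : closedBall x 1 \ closedBall y 1 ⊆ closedBall x 1 \ closedBall y' 1 := by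
    rintro p ⟨hp1, hp2⟩
    refine ⟨hp1, fun hp3 => hp2 ?_⟩
    rw [mem_closedBall, dist_eq_norm] at hp1 hp3 ⊢
    have hyd : y - p = (1 - d) • (x - p) + d • (y' - p) := by
      rw [hy']
      match_scalars <;> field_simp <;> ring
    calc ‖p - y‖ = ‖y - p‖ := norm_sub_rev _ _
      _ ≤ ‖(1 - d) • (x - p)‖ + ‖d • (y' - p)‖ := hyd ▸ norm_add_le _ _
      _ = (1 - d) * ‖x - p‖ + d * ‖y' - p‖ := by
          rw [norm_smul, norm_smul, Real.norm_eq_abs, Real.norm_eq_abs,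
            abs_of_nonneg (by linarith), abs_of_pos h0]
      _ ≤ (1 - d) * 1 + d * 1 := by
          gcongr
          · rwa [norm_sub_rev, ← dist_eq_norm]
          · rwa [norm_sub_rev, ← dist_eq_norm]
      _ = 1 := by ring
  refine le_trans (measure_mono hsub) ?_
  -- isometry step
  have hnorm : ‖ept‖ = ‖y' - x‖ := by
    rw [hdy']; simp [ept, EuclideanSpace.norm_single]
  set R : Pt ≃ₗᵢ[ℝ] Pt := Submodule.reflection (ℝ ∙ (ept - (y' - x)))ᗮ with hRdef
  have hRe : R ept = y' - x := Submodule.reflection_sub hnorm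
  set G : Pt → Pt := fun p => R p + x with hG
  have hGmp : MeasurePreserving G volume volume :=
    (measurePreserving_add_right volume x).comp R.measurePreserving
  have hpre : G ⁻¹' (closedBall x 1 \ closedBall y' 1)
      = closedBall (0:Pt) 1 \ closedBall ept 1 := by
    ext p
    simp only [Set.mem_preimage, Set.mem_diff, mem_closedBall, hG]
    have e1 : dist (R p + x) x = dist p 0 := by
      rw [dist_eq_norm, add_sub_cancel_right, R.norm_map, dist_zero_right]
    have e2 : dist (R p + x) y' = dist p ept := by
      rw [dist_eq_norm, dist_eq_norm, show R p + x - y' = R p - (y' - x) from by abel,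
        ← hRe, ← R.map_sub, R.norm_map]
    rw [e1, e2]
  calc volume (closedBall x 1 \ closedBall y' 1)
      = volume (G ⁻¹' (closedBall x 1 \ closedBall y' 1)) :=
        (hGmp.measure_preimage ((measurableSet_closedBall.diff
          measurableSet_closedBall).nullMeasurableSet)).symm
    _ = volume (closedBall (0:Pt) 1 \ closedBall ept 1) := by rw [hpre]
    _ ≤ _ := diff_ub_unit

lemma volume_openSquare (l : ℝ) (hl : 0 ≤ l) : volume (openSquare l) = ENNReal.ofReal (4 * l^2) := by
  have hset : openSquare l = ψ ⁻¹' (Set.Ioo (-l) l ×ˢ Set.Ioo (-l) l) := by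
    ext p
    simp only [openSquare, Set.mem_setOf_eq, Set.mem_preimage, Set.mem_prod, Set.mem_Ioo]
    rw [show ψ p = (p 0, p 1) from rfl]
    simp [abs_lt]
  rw [hset, ψ_mp.measure_preimage ((measurableSet_Ioo.prod measurableSet_Ioo).nullMeasurableSet)]
  rw [show (volume : Measure (ℝ × ℝ)) = volume.prod volume from Measure.volume_eq_prod ℝ ℝ]
  rw [Measure.prod_prod, Real.volume_Ioo, ← ENNReal.ofReal_mul (by linarith)]
  congr 1
  ring

lemma key (C : ℕ → Pt) (hcover : (⋃ n, closedBall (C n) 1) = Set.univ)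
    (hdist : ∀ n, 1 ≤ n → 0 < dist (C n) (C (n - 1)) ∧ dist (C n) (C (n - 1)) ≤ 1)
    (l : ℝ) (hl : 0 ≤ l) :
    ENNReal.ofReal (4 * l^2) ≤ ENNReal.ofReal π
      + Ncount C l * ENNReal.ofReal (π/3 + Real.sqrt 3/2) := by
  set S := {i : ℕ | (closedBall (C i) 1 ∩ openSquare l).Nonempty} with hS
  set D : ℕ → Set Pt := fun i => closedBall (C i) 1 \ closedBall (C (i-1)) 1 with hD
  classical
  have hcov2 : openSquare l ⊆ closedBall (C 0) 1 ∪ ⋃ i ∈ S, D i := by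
    intro p hp
    have hex : ∃ n, p ∈ closedBall (C n) 1 := by
      have : p ∈ ⋃ n, closedBall (C n) 1 := hcover.symm ▸ Set.mem_univ p
      exact Set.mem_iUnion.mp this
    have hn : p ∈ closedBall (C (Nat.find hex)) 1 := Nat.find_spec hex
    rcases Nat.eq_zero_or_pos (Nat.find hex) with h0 | hpos
    · left; exact h0 ▸ hn
    · right
      refine Set.mem_biUnion (show Nat.find hex ∈ S from ⟨p, hn, hp⟩) ⟨hn, ?_⟩
      exact Nat.find_min hex (Nat.sub_lt hpos one_pos)
  calc ENNReal.ofReal (4 * l^2) = volume (openSquare l) := (volume_openSquare l hl).symm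
    _ ≤ volume (closedBall (C 0) 1) + volume (⋃ i ∈ S, D i) :=
        le_trans (measure_mono hcov2) (measure_union_le _ _)
    _ ≤ ENNReal.ofReal π + ∑' i : S, volume (D i) := by
        rw [ball_area]
        gcongr
        exact measure_biUnion_le volume (Set.to_countable S) D
    _ ≤ ENNReal.ofReal π + ∑' _ : S, ENNReal.ofReal (π/3 + Real.sqrt 3/2) := by
        gcongr with i
        rcases Nat.eq_zero_or_pos i with h0 | hpos
        · have : D (i : ℕ) = ∅ := by rw [hD, h0]; simp
          rw [this]
          simp
        · exact diff_ub _ _ (hdist i hpos).1 (hdist i hpos).2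
    _ = ENNReal.ofReal π + Ncount C l * ENNReal.ofReal (π/3 + Real.sqrt 3/2) := by
        rw [ENNReal.tsum_set_const]
        rfl

lemma rA_pos : 0 < π/3 + Real.sqrt 3/2 := by positivity

lemma tendsto_r : Tendsto (fun l : ℝ => ((4*l^2 - π)/(π/3 + Real.sqrt 3/2)) * π / (4*l^2))
    atTop (nhds (π / (π/3 + Real.sqrt 3/2))) := by
  set A := π/3 + Real.sqrt 3/2 with hA
  have h1 : Tendsto (fun l : ℝ => 4*l^2) atTop atTop :=
    (tendsto_pow_atTop two_ne_zero).const_mul_atTop (by norm_num)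
  have h2 : Tendsto (fun l : ℝ => π * (4*l^2)⁻¹) atTop (nhds 0) := by
    have := h1.inv_tendsto_atTop
    have := this.const_mul π
    simpa using this
  have h3 : Tendsto (fun l : ℝ => π/A * (1 - π * (4*l^2)⁻¹)) atTop (nhds (π/A * (1 - 0))) :=
    (((tendsto_const_nhds (x := (1:ℝ))).sub h2)).const_mul _
  simp only [mul_zero, sub_zero, mul_one] at h3
  refine Tendsto.congr' ?_ h3
  filter_upwards [eventually_gt_atTop (0:ℝ)] with l hl
  have h4 : (4*l^2 : ℝ) ≠ 0 := by positivity
  field_simp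

/-- Crude lower bound (no restriction on turning angles): the lower density of a sequence
covering of the plane by unit disks, each containing the center of the next, is at least
`π/(π/3 + √3/2)`. -/
theorem lower_density_ge_crude (C : ℕ → Pt)
    (hcover : (⋃ n, closedBall (C n) 1) = Set.univ)
    (hdist : ∀ n, 1 ≤ n → 0 < dist (C n) (C (n - 1)) ∧ dist (C n) (C (n - 1)) ≤ 1) :
    ENNReal.ofReal (π / (π / 3 + Real.sqrt 3 / 2)) ≤ lowerDensity C := by
  set A := π/3 + Real.sqrt 3/2 with hA
  set g : ℝ → ℝ≥0∞ := fun l => ENNReal.ofReal (((4*l^2 - π)/A) * π / (4*l^2)) with hg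
  have hgle : ∀ᶠ l in (atTop : Filter ℝ), g l
      ≤ Ncount C l * ENNReal.ofReal π / ENNReal.ofReal (4 * l ^ 2) := by
    filter_upwards [eventually_ge_atTop (2:ℝ)] with l hl
    have hl0 : (0:ℝ) ≤ l := by linarith
    have hsq : π ≤ 4 * l^2 := by nlinarith [Real.pi_lt_d2]
    have hk := key C hcover hdist l hl0
    have hk2 : ENNReal.ofReal (4*l^2 - π) ≤ Ncount C l * ENNReal.ofReal A := by
      rw [ENNReal.ofReal_sub _ Real.pi_pos.le]
      exact tsub_le_iff_left.mpr hk
    have hk3 : ENNReal.ofReal (4*l^2 - π) / ENNReal.ofReal A ≤ Ncount C l := by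
      rw [ENNReal.div_le_iff_le_mul (Or.inl (ENNReal.ofReal_pos.mpr rA_pos).ne')
        (Or.inl ENNReal.ofReal_ne_top)]
      exact hk2
    have hgeq : g l = ENNReal.ofReal (4*l^2 - π) / ENNReal.ofReal A * ENNReal.ofReal π
        / ENNReal.ofReal (4*l^2) := by
      show ENNReal.ofReal (((4*l^2 - π)/A) * π / (4*l^2)) = _
      rw [ENNReal.ofReal_div_of_pos (by nlinarith), ENNReal.ofReal_mul (div_nonneg (by linarith) rA_pos.le),
        ENNReal.ofReal_div_of_pos rA_pos]
    rw [hgeq]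
    gcongr
  have hgt : Tendsto g atTop (nhds (ENNReal.ofReal (π / A))) :=
    (ENNReal.continuous_ofReal.continuousAt.tendsto).comp tendsto_r
  calc ENNReal.ofReal (π / A) = Filter.liminf g atTop := (hgt.liminf_eq).symm
    _ ≤ lowerDensity C := Filter.liminf_le_liminf hgle
end
end
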